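/- Let (X, d) be a metric space and φ : ℝ × X → X a flow (φ_0 = id, φ_{t+s} = φ_t ∘ φ_s) such that for each r ∈ ℝ the map φ_r is Lipschitz. Fix t, s ∈ ℝ and let C ≥ 1 be a common Lipschitz constant for all φ_r with |r| ≤ |t| + |s|. Let Σ₁, Σ₂ ⊆ X, t₀ > 0, T > t₀ + |t| + |s|, and R > 0. For subsets A, B ⊆ X define L^{R}_{A,B}(a, b) := { ρ ∈ A : ∃ q ∈ B(ρ, R), ∃ r with a ≤ |r| ≤ b, d(φ_r(q), B) < R }. Suppose ρ ∈ φ_t(Σ₁) and d(ρ, L^{R}_{φ_t(Σ₁), φ_s(Σ₂)}(t₀ + |t| + |s|, T - |t| - |s|)) < R. Then φ_{-t}(ρ) ∈ Σ₁ and d(φ_{-t}(ρ), L^{C²R}_{Σ₁, Σ₂}(t₀, T)) < C·R. -/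
import Mathlib


/-- The near-looping set `L^r_{A,B}(a, b)`: points of `A` from which an
`r`-perturbed trajectory reaches the `r`-neighborhood of `B` at some time `u`
with `a ≤ |u| ≤ b`. -/
def loopSet {X : Type*} [MetricSpace X] (φ : ℝ → X → X)
    (A B : Set X) (r a b : ℝ) : Set X :=
  {ρ | ρ ∈ A ∧ ∃ q ∈ Metric.ball ρ r, ∃ u : ℝ, a ≤ |u| ∧ |u| ≤ b ∧
    φ u q ∈ Metric.thickening r B}

/-- Non-looping of a pair is inherited by flow-outs: if `ρ ∈ φ_t(S₁)` is within
`R` of the near-looping set between the flow-outs `φ_t(S₁)`, `φ_s(S₂)` in the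
shrunken time window, then `φ_{-t}(ρ) ∈ S₁` lies within `C·R` of the
near-looping set between `S₁` and `S₂` at scale `C²R` in the window `[t₀, T]`. -/
theorem flowout_nonlooping_pullback {X : Type*} [MetricSpace X]
    (φ : ℝ → X → X) (hφ0 : φ 0 = id)
    (hφadd : ∀ a b : ℝ, φ (a + b) = φ a ∘ φ b)
    (t s C : ℝ) (hC : 1 ≤ C)
    (hLip : ∀ r : ℝ, |r| ≤ |t| + |s| → LipschitzWith (Real.toNNReal C) (φ r))
    (S₁ S₂ : Set X) (t₀ T R : ℝ) (ht₀ : 0 < t₀) (hR : 0 < R)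
    (hT : t₀ + |t| + |s| < T)
    (ρ : X) (hρ : ρ ∈ φ t '' S₁)
    (hnear : ρ ∈ Metric.thickening R
      (loopSet φ (φ t '' S₁) (φ s '' S₂) R (t₀ + |t| + |s|) (T - |t| - |s|))) :
    φ (-t) ρ ∈ S₁ ∧
      φ (-t) ρ ∈ Metric.thickening (C * R) (loopSet φ S₁ S₂ (C ^ 2 * R) t₀ T) := by
  have hC0 : (0:ℝ) ≤ C := by linarith
  have hCcoe : ((Real.toNNReal C : NNReal) : ℝ) = C := Real.coe_toNNReal C hC0
  have hdist : ∀ r : ℝ, |r| ≤ |t| + |s| → ∀ a b : X,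
      dist (φ r a) (φ r b) ≤ C * dist a b := by
    intro r hr a b
    have := (hLip r hr).dist_le_mul a b
    rwa [hCcoe] at this
  have hinv : ∀ a : ℝ, ∀ x : X, φ (-a) (φ a x) = x := by
    intro a x
    have h := hφadd (-a) a
    rw [neg_add_cancel, hφ0] at h
    simpa using (congrFun h x).symm
  have h1 : φ (-t) ρ ∈ S₁ := by
    obtain ⟨x, hx, rfl⟩ := hρ
    rwa [hinv t x]
  refine ⟨h1, ?_⟩
  rw [Metric.mem_thickening_iff] at hnear ⊢
  obtain ⟨ρ', hρ', hdρρ'⟩ := hnear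
  obtain ⟨⟨x', hx', hx'eq⟩, q, hq, u, hu1, hu2, hφuq⟩ := hρ'
  rw [Metric.mem_thickening_iff] at hφuq
  obtain ⟨y', ⟨y, hy, hyeq⟩, hdy⟩ := hφuq
  have hq' : dist ρ' q < R := by rw [dist_comm]; exact Metric.mem_ball.mp hq
  have habs_t : |(-t)| ≤ |t| + |s| := by
    rw [abs_neg]; linarith [abs_nonneg s]
  have habs_s : |(-s)| ≤ |t| + |s| := by
    rw [abs_neg]; linarith [abs_nonneg t]
  have ex' : φ (-t) ρ' = x' := by rw [← hx'eq, hinv]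
  have ey : φ (-s) y' = y := by rw [← hyeq, hinv]
  have hts : |t - s| ≤ |t| + |s| := abs_sub t s
  refine ⟨x', ⟨hx', φ (-t) q, ?_, u + t - s, ?_, ?_, ?_⟩, ?_⟩
  · rw [Metric.mem_ball, dist_comm]
    have key := hdist _ habs_t ρ' q
    rw [ex'] at key
    nlinarith [mul_lt_mul_of_pos_left hq' (show (0:ℝ) < C by linarith), mul_nonneg (mul_nonneg (show (0:ℝ) ≤ C - 1 by linarith) hC0) hR.le]
  · have h1 := abs_sub_abs_le_abs_sub u (-(t - s))
    rw [show u - -(t - s) = u + t - s from by ring] at h1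
    rw [abs_neg] at h1
    linarith
  · have h1 := abs_add_le u (t - s)
    rw [show u + (t - s) = u + t - s from by ring] at h1
    linarith
  · rw [Metric.mem_thickening_iff]
    refine ⟨y, hy, ?_⟩
    have hcomp : φ (u + t - s) (φ (-t) q) = φ (-s) (φ u q) := by
      have e1 : φ (u + t - s) (φ (-t) q) = φ ((u + t - s) + -t) q := by
        rw [hφadd (u + t - s) (-t)]; rfl
      rw [e1, show (u + t - s) + -t = -s + u from by ring, hφadd (-s) u]; rfl
    rw [hcomp]
    have key := hdist _ habs_s (φ u q) y'
    rw [ey] at key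
    nlinarith [mul_lt_mul_of_pos_left hdy (show (0:ℝ) < C by linarith), mul_nonneg (mul_nonneg (show (0:ℝ) ≤ C - 1 by linarith) hC0) hR.le]
  · have key := hdist _ habs_t ρ ρ'
    rw [ex'] at key
    nlinarith [mul_lt_mul_of_pos_left hdρρ' (show (0:ℝ) < C by linarith)]
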